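/- Let α ≥ π/2 and let x ∈ 𝒳 be a slowly oscillating periodic solution of Wright's equation x'(t) = -α(e^{x(t-1)} - 1) with q̄(x) ≥ 3. Define a_1(α) = -(α - 1) and recursively a_{i+1}(α) = α(e^{a_i(α)} - 1). Then x(t) < -t · a_i(α) for all t ∈ [-1,0) and all i ≥ 1. -/
import Mathlib


open Real Set Filter

noncomputable section

/-- `x` solves Wright's equation `x'(t) = -α (e^{x(t-1)} - 1)` on all of `ℝ`. -/
def WrightSol (α : ℝ) (x : ℝ → ℝ) : Prop :=
  ∀ t : ℝ, HasDerivAt x (-α * (Real.exp (x (t - 1)) - 1)) t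

/-- The space 𝒳: C¹ functions with `x 0 = 0`, `x' 0 > 0` and `x < 0` on `(-1,0)`. -/
def InX (x : ℝ → ℝ) : Prop :=
  ContDiff ℝ 1 x ∧ x 0 = 0 ∧ 0 < deriv x 0 ∧ ∀ t ∈ Set.Ioo (-1 : ℝ) 0, x t < 0

/-- A slowly oscillating periodic solution in 𝒳, with first zero `q` and data `qbar`:
positive on `(0,q)`, negative on `(q, q+qbar)`, periodic with minimal period `q+qbar`. -/
def SOPSX (α q qbar : ℝ) (x : ℝ → ℝ) : Prop :=
  InX x ∧ WrightSol α x ∧ 1 < q ∧ 1 < qbar ∧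
  (∀ t ∈ Set.Ioo 0 q, 0 < x t) ∧
  (∀ t ∈ Set.Ioo q (q + qbar), x t < 0) ∧
  Function.Periodic x (q + qbar) ∧
  (∀ T : ℝ, 0 < T → Function.Periodic x T → q + qbar ≤ T)

/-- A slowly oscillating periodic solution (up to time translation). -/
def SOPS (α : ℝ) (x : ℝ → ℝ) : Prop :=
  WrightSol α x ∧
  ∃ q qbar : ℝ, 1 < q ∧ 1 < qbar ∧
    (∃ τ : ℝ, (∀ t ∈ Set.Ioo 0 q, 0 < x (t + τ)) ∧
      (∀ t ∈ Set.Ioo q (q + qbar), x (t + τ) < 0)) ∧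
    Function.Periodic x (q + qbar) ∧
    (∀ T : ℝ, 0 < T → Function.Periodic x T → q + qbar ≤ T)

/-- Jones' iterative lower-bound constants: `aJones α i` corresponds to `a_{i+1}` in the
paper, so `aJones α 0 = a_1 = -(α - 1)` and `aJones α (i+1) = α (e^{aJones α i} - 1)`. -/
noncomputable def aJones (α : ℝ) : ℕ → ℝ
  | 0 => -(α - 1)
  | (i + 1) => α * (Real.exp (aJones α i) - 1)


theorem jones_minus_one (α q qbar : ℝ) (x : ℝ → ℝ) (hα : Real.pi / 2 ≤ α)
    (hx : SOPSX α q qbar x) (hqbar : 3 ≤ qbar) :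
    ∀ i : ℕ, ∀ t ∈ Set.Ico (-1 : ℝ) 0, x t < -t * aJones α i := by
  obtain ⟨⟨hC1, hx0, -, -⟩, hW, hq, hqbar1, hpos, hneg, hper, -⟩ := hx
  have hα1 : (1:ℝ) < α := by nlinarith [Real.pi_gt_three]
  have hα0 : (0:ℝ) < α := by linarith
  have hdiff : Differentiable ℝ x := fun t => (hW t).differentiableAt
  have hderiv : ∀ t, deriv x t = -α * (Real.exp (x (t - 1)) - 1) := fun t => (hW t).deriv
  have hxL : x (q + qbar) = 0 := by
    have := hper 0; rw [zero_add] at this; rw [this, hx0]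
  set c : ℝ := x (q + qbar - 1) with hcdef
  have hc0 : c < 0 := hneg _ ⟨by linarith, by linarith⟩
  -- x is nondecreasing on [L-2, L-1]
  have hmono : MonotoneOn x (Set.Icc (q + qbar - 2) (q + qbar - 1)) := by
    apply monotoneOn_of_deriv_nonneg (convex_Icc _ _) hdiff.continuous.continuousOn
      hdiff.differentiableOn
    intro v hv
    rw [interior_Icc] at hv
    rw [hderiv]
    have hn : x (v - 1) < 0 := hneg _ ⟨by linarith [hv.1], by linarith [hv.2]⟩
    have he : Real.exp (x (v - 1)) < 1 := Real.exp_lt_one_iff.mpr hn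
    nlinarith
  have hle_c : ∀ s ∈ Set.Icc (-1:ℝ) 0, x (s - 1) ≤ c := by
    intro s hs
    have hp : x (s - 1) = x (s - 1 + (q + qbar)) := (hper (s - 1)).symm
    rw [hp]
    exact hmono ⟨by linarith [hs.1], by linarith [hs.2]⟩
      ⟨by linarith, le_refl _⟩ (by linarith [hs.2])
  -- key inequality : c ≤ α (e^c - 1)
  have key2 : c ≤ α * (Real.exp c - 1) := by
    have hmono2 : MonotoneOn (fun v => x v + α * (Real.exp c - 1) * v)
        (Set.Icc (q + qbar - 1) (q + qbar)) := by
      have hd : ∀ v : ℝ, HasDerivAt (fun v => x v + α * (Real.exp c - 1) * v)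
          (-α * (Real.exp (x (v - 1)) - 1) + α * (Real.exp c - 1)) v := by
        intro v
        have h1 : HasDerivAt (fun v : ℝ => α * (Real.exp c - 1) * v)
            (α * (Real.exp c - 1)) v := by
          simpa using (hasDerivAt_id v).const_mul (α * (Real.exp c - 1))
        exact (hW v).add h1
      apply monotoneOn_of_deriv_nonneg (convex_Icc _ _)
        (fun v _ => (hd v).differentiableAt.continuousAt.continuousWithinAt)
        (fun v _ => (hd v).differentiableAt.differentiableWithinAt)
      intro v hv
      rw [interior_Icc] at hv
      rw [(hd v).deriv]
      have hxv : x (v - 1) ≤ c :=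
        hmono ⟨by linarith [hv.1], by linarith [hv.2]⟩ ⟨by linarith, le_refl _⟩
          (by linarith [hv.2])
      have := Real.exp_le_exp.mpr hxv
      nlinarith
    have h12 := hmono2 ⟨le_refl _, by linarith⟩ ⟨by linarith, le_refl _⟩ (by linarith)
    simp only [hxL] at h12
    have hring : α * (Real.exp c - 1) * (q + qbar) - α * (Real.exp c - 1) * (q + qbar - 1)
        = α * (Real.exp c - 1) := by ring
    linarith
  have key3 : ∀ i, c < aJones α i := by
    intro i
    induction i with
    | zero =>
      show c < -(α - 1)
      by_contra hcon
      push_neg at hcon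
      have h1 : -c + 1 < Real.exp (-c) := Real.add_one_lt_exp (by linarith)
      have he : Real.exp c * Real.exp (-c) = 1 := by
        rw [← Real.exp_add]; simp
      have h2 : Real.exp c * (1 - c) < 1 := by nlinarith [Real.exp_pos c]
      have h3 : (c + α) * (1 - c) ≤ α * Real.exp c * (1 - c) := by nlinarith
      have h4 : α * Real.exp c * (1 - c) < α := by nlinarith
      have h6 : 0 ≤ (-c) * (α + c - 1) := mul_nonneg (by linarith) (by linarith)
      nlinarith
    | succ i ih =>
      show c < α * (Real.exp (aJones α i) - 1)
      have := Real.exp_lt_exp.mpr ih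
      nlinarith
  have hdec : ∀ j : ℕ, aJones α j < 0 ∧ aJones α (j + 1) < aJones α j := by
    intro j
    induction j with
    | zero =>
      constructor
      · show -(α - 1) < 0; linarith
      · show α * (Real.exp (-(α - 1)) - 1) < -(α - 1)
        have h1 : α - 1 + 1 < Real.exp (α - 1) := Real.add_one_lt_exp (by linarith)
        have he : Real.exp (α - 1) * Real.exp (-(α - 1)) = 1 := by
          rw [← Real.exp_add]; simp
        nlinarith [Real.exp_pos (-(α - 1)),
          mul_lt_mul_of_pos_right h1 (Real.exp_pos (-(α - 1)))]
    | succ j ih =>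
      obtain ⟨ih0, ih1⟩ := ih
      constructor
      · show α * (Real.exp (aJones α j) - 1) < 0
        have := Real.exp_lt_one_iff.mpr ih0
        nlinarith
      · show α * (Real.exp (aJones α (j + 1)) - 1) < α * (Real.exp (aJones α j) - 1)
        have := Real.exp_lt_exp.mpr ih1
        nlinarith
  intro i t ht
  have hsm : StrictMonoOn (fun s => x s + aJones α i * s) (Set.Icc (-1:ℝ) 0) := by
    have hd : ∀ s : ℝ, HasDerivAt (fun s => x s + aJones α i * s)
        (-α * (Real.exp (x (s - 1)) - 1) + aJones α i) s := by
      intro s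
      have h1 : HasDerivAt (fun s : ℝ => aJones α i * s) (aJones α i) s := by
        simpa using (hasDerivAt_id s).const_mul (aJones α i)
      exact (hW s).add h1
    apply strictMonoOn_of_deriv_pos (convex_Icc _ _)
      (fun s _ => (hd s).differentiableAt.continuousAt.continuousWithinAt)
    intro s hs
    rw [interior_Icc] at hs
    rw [(hd s).deriv]
    have h1 : x (s - 1) ≤ c := hle_c s ⟨hs.1.le, hs.2.le⟩
    have h2 : Real.exp (x (s - 1)) ≤ Real.exp c := Real.exp_le_exp.mpr h1
    have h3 := key3 i
    have hrec : aJones α (i + 1) = α * (Real.exp (aJones α i) - 1) := rfl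
    nlinarith [mul_le_mul_of_nonneg_left h2 hα0.le,
      mul_lt_mul_of_pos_left (Real.exp_lt_exp.mpr h3) hα0, (hdec i).2]
  have hlt := hsm ⟨ht.1, ht.2.le⟩ ⟨by norm_num, le_refl (0:ℝ)⟩ ht.2
  simp only [hx0, mul_zero, add_zero, zero_add] at hlt
  nlinarith [hlt]
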